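/- Assume θ ∈ [0, π/2] (equivalently ε ≤ 0) and that 4p(z)³ + 27q(z)² ≤ 0 for all z ∈ (0,1). Then the smallest root t₂(z) = 2√(−p(z)/3)·cos((1/3)·arccos(g(z)) − 4π/3) is monotone decreasing as a function of z on (0,1). -/

import Mathlib

open Matrix Real ComplexOrder

noncomputable section
namespace T2Aux

def Hm (p0 p1 p2 ct st zz : ℝ) : Matrix (Fin 3) (Fin 3) ℂ :=
  !![(p0:ℂ), ((Real.sqrt (p0*p1) * zz : ℝ) : ℂ),
      ((Real.sqrt (p0*p2) * zz : ℝ) : ℂ) * ((ct:ℂ) + (st:ℂ)*Complex.I);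
     ((Real.sqrt (p0*p1) * zz : ℝ) : ℂ), (p1:ℂ), ((Real.sqrt (p1*p2) * zz : ℝ) : ℂ);
     ((Real.sqrt (p0*p2) * zz : ℝ) : ℂ) * ((ct:ℂ) - (st:ℂ)*Complex.I),
      ((Real.sqrt (p1*p2) * zz : ℝ) : ℂ), (p2:ℂ)]

lemma Hm_herm (p0 p1 p2 ct st zz : ℝ) : (Hm p0 p1 p2 ct st zz).IsHermitian := by
  unfold Matrix.IsHermitian
  ext i j
  fin_cases i <;> fin_cases j <;>
    simp [Hm, Complex.ext_iff, Complex.conj_re, Complex.conj_im]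


lemma det_id (p0 p1 p2 ct st zz : ℝ) (h0 : 0 ≤ p0) (h1 : 0 ≤ p1) (h2 : 0 ≤ p2)
    (hsum : p0 + p1 + p2 = 1) (hpyth : ct^2 + st^2 = 1) (μ : ℝ) :
    Matrix.det ((μ:ℂ) • (1 : Matrix (Fin 3) (Fin 3) ℂ) - Hm p0 p1 p2 ct st zz)
      = (((μ - 1/3)^3
          + ((1/6) * (1 - 3*p0^2 - 3*p1^2 - 3*p2^2) + (-(p0*p1 + p0*p2 + p1*p2))*zz^2) * (μ - 1/3)
          + ((1/27) * (3*p1 - 1) * (3*p2 - 1) * (3*p1 + 3*p2 - 2)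
             + ((1/27) * (18*(p0*p1 + p0*p2 + p1*p2) -
                27*(p0^2*p1 + p0*p1^2 + p0^2*p2 + p1^2*p2 + p0*p2^2 + p1*p2^2)))*zz^2
             + (-2*p0*p1*p2 * ct)*zz^3) : ℝ) : ℂ) := by
  set a := Real.sqrt (p0*p1) with ha_def
  set b := Real.sqrt (p0*p2) with hb_def
  set c := Real.sqrt (p1*p2) with hc_def
  have ha : (a:ℂ)^2 = (p0:ℂ)*(p1:ℂ) := by
    rw [← Complex.ofReal_pow, Real.sq_sqrt (mul_nonneg h0 h1)]; push_cast; ring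
  have hb : (b:ℂ)^2 = (p0:ℂ)*(p2:ℂ) := by
    rw [← Complex.ofReal_pow, Real.sq_sqrt (mul_nonneg h0 h2)]; push_cast; ring
  have hc : (c:ℂ)^2 = (p1:ℂ)*(p2:ℂ) := by
    rw [← Complex.ofReal_pow, Real.sq_sqrt (mul_nonneg h1 h2)]; push_cast; ring
  have habc : (a:ℂ)*(b:ℂ)*(c:ℂ) = (p0:ℂ)*(p1:ℂ)*(p2:ℂ) := by
    have : a*b*c = p0*p1*p2 := by
      rw [ha_def, hb_def, hc_def, ← Real.sqrt_mul (mul_nonneg h0 h1),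
        ← Real.sqrt_mul (by positivity)]
      rw [show p0*p1*(p0*p2)*(p1*p2) = (p0*p1*p2)^2 by ring,
        Real.sqrt_sq (by positivity)]
    exact_mod_cast congrArg (fun t : ℝ => (t:ℂ)) this
  have hsumC : (p0:ℂ) + p1 + p2 = 1 := by exact_mod_cast hsum
  have hpyC : (ct:ℂ)^2 + (st:ℂ)^2 = 1 := by exact_mod_cast hpyth
  have hM : (μ:ℂ) • (1 : Matrix (Fin 3) (Fin 3) ℂ) - Hm p0 p1 p2 ct st zz
      = !![(μ:ℂ) - p0, -((a:ℂ)*zz), -(((b:ℂ)*zz) * ((ct:ℂ) + (st:ℂ)*Complex.I));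
           -((a:ℂ)*zz), (μ:ℂ) - p1, -((c:ℂ)*zz);
           -(((b:ℂ)*zz) * ((ct:ℂ) - (st:ℂ)*Complex.I)), -((c:ℂ)*zz), (μ:ℂ) - p2] := by
    ext i j
    fin_cases i <;> fin_cases j <;>
      simp [Hm, Matrix.one_apply, ← ha_def, ← hb_def, ← hc_def] <;> push_cast <;> ring
  rw [hM, Matrix.det_fin_three]
  show _ = _
  norm_num [Matrix.cons_val_zero, Matrix.cons_val_one, Matrix.head_cons, Matrix.cons_val_two,
    Matrix.tail_cons]
  push_cast
  linear_combination (-((zz:ℂ)^2)*((μ:ℂ)-p2)) * ha + (-((zz:ℂ)^2)*((μ:ℂ)-p1)) * hb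
    + (-((zz:ℂ)^2)*((μ:ℂ)-p0)) * hc + (-2*(zz:ℂ)^3*(ct:ℂ)) * habc
    + (-((zz:ℂ)^2)*((μ:ℂ)-(p1:ℂ))*(b:ℂ)^2) * hpyC
    + (-(μ:ℂ)^2 + (1/2)*(μ:ℂ)*(1+(p0:ℂ)+p1+p2) + (1/6)*(-1-(p0:ℂ)+p1+p2)
        - (p1:ℂ)*p2 + (zz:ℂ)^2*((p0:ℂ)*p1+(p0:ℂ)*p2+(p1:ℂ)*p2)) * hsumC
    + (((μ:ℂ)-(p1:ℂ))*(zz:ℂ)^2*(b:ℂ)^2*(st:ℂ)^2) * Complex.I_sq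


lemma ord1 (r u v w : ℝ) (hr0 : 0 ≤ r) (hv0 : 0 ≤ v) (hw0 : 0 ≤ w) (hu : 1/2 ≤ u) :
    2*r*(-(1/2)*u - (w/2)*v) ≤ 2*r*u := by
  nlinarith [mul_nonneg hr0 (mul_nonneg hw0 hv0), mul_nonneg hr0 (by linarith : (0:ℝ) ≤ u)]

lemma ord2 (r u v w : ℝ) (hr0 : 0 ≤ r) (hv0 : 0 ≤ v) (hw0 : 0 ≤ w) :
    2*r*(-(1/2)*u - (w/2)*v) ≤ 2*r*(-(1/2)*u + (w/2)*v) := by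
  nlinarith [mul_nonneg hr0 (mul_nonneg hw0 hv0)]

lemma vieta (r u v w Pv Qv X : ℝ) (huv : u^2 + v^2 = 1) (h3 : w^2 = 3)
    (hr2 : r^2 = -(Pv)/3) (hQ2 : 2*r^3*(4*u^3 - 3*u) = -Qv) :
    (X - 2*r*u) * (X - (2*r*(-(1/2)*u + (w/2)*v))) * (X - (2*r*(-(1/2)*u - (w/2)*v)))
      = X^3 + Pv*X + Qv := by
  linear_combination (X*(-3*r^2) + 6*r^3*u) * huv + ((-(X*r^2*v^2)) + 2*r^3*u*v^2) * h3
    + (-3*X) * hr2 + (-1) * hQ2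

lemma cubic_key (Pv Qv : ℝ) (hPv : Pv ≤ 0) (hd : 4*Pv^3 + 27*Qv^2 ≤ 0) :
    ∃ t0 t1 t2 : ℝ,
      t2 = 2 * Real.sqrt (-(Pv)/3) *
        Real.cos ((1/3) * Real.arccos ((3/2) * (Qv / Pv) * Real.sqrt (-3 / Pv)) - 4 * Real.pi / 3)
      ∧ t2 ≤ t0 ∧ t2 ≤ t1
      ∧ ∀ X : ℝ, (X - t0) * (X - t1) * (X - t2) = X^3 + Pv*X + Qv := by
  rcases eq_or_lt_of_le hPv with hP0 | hPneg
  · -- degenerate case Pv = 0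
    rw [hP0] at hd
    norm_num at hd
    have hQ0 : Qv = 0 := by
      have hQsq : Qv^2 = 0 := le_antisymm (by linarith) (sq_nonneg _)
      exact pow_eq_zero_iff (two_ne_zero) |>.mp hQsq
    have hz : 2 * Real.sqrt (-(Pv)/3) *
        Real.cos ((1/3) * Real.arccos ((3/2) * (Qv / Pv) * Real.sqrt (-3 / Pv))
          - 4 * Real.pi / 3) = 0 := by
      rw [hP0]; norm_num
    exact ⟨0, 0, _, rfl, le_of_eq hz, le_of_eq hz,
      fun X => by rw [hz, hP0, hQ0]; ring⟩
  · set gv := (3/2) * (Qv / Pv) * Real.sqrt (-3 / Pv) with hgv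
    set r := Real.sqrt (-(Pv)/3) with hr
    set ψ := (1/3) * Real.arccos gv with hψ
    have hPne : Pv ≠ 0 := ne_of_lt hPneg
    have hrpos : (0:ℝ) < -(Pv)/3 := by linarith
    have hr2 : r^2 = -(Pv)/3 := Real.sq_sqrt hrpos.le
    have hr0 : 0 ≤ r := Real.sqrt_nonneg _
    have hs0 : (0:ℝ) ≤ -3 / Pv := by
      rw [div_nonneg_iff]; right; constructor <;> linarith
    have hs2 : (Real.sqrt (-3 / Pv))^2 = -3 / Pv := Real.sq_sqrt hs0
    have hnP : (0:ℝ) < -Pv := by linarith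
    have hg2 : gv^2 ≤ 1 := by
      have hden : (0:ℝ) < 4*(-Pv)^3 := by
        have := pow_pos hnP 3; linarith
      have hgv2 : gv^2 = 27*Qv^2 / (4*(-Pv)^3) := by
        rw [hgv, mul_pow, mul_pow, hs2]
        field_simp
        ring
      rw [hgv2, div_le_one hden]
      nlinarith
    have hg1 : -1 ≤ gv := by nlinarith [sq_nonneg (gv - 1), sq_nonneg (gv + 1)]
    have hg1' : gv ≤ 1 := by nlinarith [sq_nonneg (gv - 1), sq_nonneg (gv + 1)]
    have hcos3 : Real.cos (3 * ψ) = gv := by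
      rw [hψ, show 3 * ((1/3) * Real.arccos gv) = Real.arccos gv by ring,
        Real.cos_arccos hg1 hg1']
    set u := Real.cos ψ with hu
    set v := Real.sin ψ with hv
    have huv : u^2 + v^2 = 1 := by rw [hu, hv]; exact Real.cos_sq_add_sin_sq ψ
    have hg : 4*u^3 - 3*u = gv := by
      rw [← hcos3, Real.cos_three_mul]
    have hψ0 : 0 ≤ ψ := by
      rw [hψ]; have := Real.arccos_nonneg gv; linarith
    have hψ3 : ψ ≤ π/3 := by
      rw [hψ]; have := Real.arccos_le_pi gv; linarith
    have hπ : 0 < π := Real.pi_pos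
    have hv0 : 0 ≤ v := Real.sin_nonneg_of_nonneg_of_le_pi hψ0 (by linarith)
    have hu12 : 1/2 ≤ u := by
      have := Real.cos_le_cos_of_nonneg_of_le_pi hψ0 (by linarith) hψ3
      rwa [Real.cos_pi_div_three] at this
    set w := Real.sqrt 3 with hw
    have hw0 : 0 ≤ w := Real.sqrt_nonneg 3
    have h3 : w^2 = 3 := Real.sq_sqrt (by norm_num)
    have hc1 : Real.cos (ψ - 2*π/3) = -(1/2)*u + (w/2)*v := by
      rw [Real.cos_sub, show (2*π/3 : ℝ) = π - π/3 by ring, Real.cos_pi_sub,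
        Real.sin_pi_sub, Real.cos_pi_div_three, Real.sin_pi_div_three]
      ring
    have hc2 : Real.cos (ψ - 4*π/3) = -(1/2)*u - (w/2)*v := by
      rw [Real.cos_sub, show (4*π/3 : ℝ) = π + π/3 by ring, Real.cos_add, Real.sin_add,
        Real.cos_pi, Real.sin_pi, Real.cos_pi_div_three, Real.sin_pi_div_three]
      ring
    have hrs : r * Real.sqrt (-3 / Pv) = 1 := by
      rw [hr, ← Real.sqrt_mul hrpos.le,
        show -(Pv)/3 * (-3/Pv) = 1 by field_simp, Real.sqrt_one]
    have hQ2 : 2*r^3*(4*u^3 - 3*u) = -Qv := by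
      rw [hg, hgv]
      rw [show 2*r^3*((3/2) * (Qv / Pv) * Real.sqrt (-3/Pv))
           = 3*(Qv/Pv)*(r^2)*(r*Real.sqrt (-3/Pv)) by ring, hrs, hr2]
      field_simp
    refine ⟨2*r*u, 2*r*Real.cos (ψ - 2*π/3), 2*r*Real.cos (ψ - 4*π/3), rfl, ?_, ?_, ?_⟩
    · rw [hc2]
      exact ord1 r u v w hr0 hv0 hw0 hu12
    · rw [hc1, hc2]
      exact ord2 r u v w hr0 hv0 hw0
    · intro X
      rw [hc1, hc2]
      exact vieta r u v w Pv Qv X huv h3 hr2 hQ2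


lemma herm_sub_smul_one {A : Matrix (Fin 3) (Fin 3) ℂ} (hA : A.IsHermitian) (lam : ℝ) :
    (A - (lam:ℂ) • (1 : Matrix (Fin 3) (Fin 3) ℂ)).IsHermitian := by
  unfold Matrix.IsHermitian
  rw [Matrix.conjTranspose_sub, hA, Matrix.conjTranspose_smul, Matrix.conjTranspose_one]
  norm_num [Complex.star_def, Complex.conj_ofReal]

lemma rayleigh_lb {A : Matrix (Fin 3) (Fin 3) ℂ} (hA : A.IsHermitian) {lam : ℝ}
    (hroot : ∀ μ : ℝ, (∃ w : Fin 3 → ℂ, w ≠ 0 ∧ A *ᵥ w = (μ:ℂ) • w) → lam ≤ μ)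
    (v : Fin 3 → ℂ) :
    lam * (dotProduct (star v) v).re ≤ (dotProduct (star v) (A *ᵥ v)).re := by
  set B := A - (lam:ℂ) • (1 : Matrix (Fin 3) (Fin 3) ℂ) with hB_def
  have hB : B.IsHermitian := herm_sub_smul_one hA lam
  have hpsd : B.PosSemidef := by
    rw [hB.posSemidef_iff_eigenvalues_nonneg, Pi.le_def]
    simp only [Pi.zero_apply]
    intro i
    set w : Fin 3 → ℂ := ⇑(hB.eigenvectorBasis i) with hw_def
    have hw0 : w ≠ 0 := by
      intro h
      exact hB.eigenvectorBasis.orthonormal.ne_zero i (by ext j; exact congrFun h j)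
    have hBw : B *ᵥ w = (hB.eigenvalues i) • w := hB.mulVec_eigenvectorBasis i
    have hAw : A *ᵥ w = ((hB.eigenvalues i + lam : ℝ) : ℂ) • w := by
      have h1 : A *ᵥ w = B *ᵥ w + (lam:ℂ) • w := by
        rw [hB_def, Matrix.sub_mulVec, Matrix.smul_mulVec, Matrix.one_mulVec]
        abel
      rw [h1, hBw]
      ext j
      simp [Pi.smul_apply, Complex.real_smul]
      push_cast
      ring
    have := hroot _ ⟨w, hw0, hAw⟩
    linarith
  have h0 := hpsd.re_dotProduct_nonneg v
  have hexp : dotProduct (star v) (B *ᵥ v)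
      = dotProduct (star v) (A *ᵥ v) - (lam:ℂ) * dotProduct (star v) v := by
    rw [hB_def, Matrix.sub_mulVec, Matrix.smul_mulVec, Matrix.one_mulVec,
      dotProduct_sub, dotProduct_smul, smul_eq_mul]
  rw [hexp] at h0
  simp only [RCLike.re_to_complex, Complex.sub_re, Complex.mul_re, Complex.ofReal_re,
    Complex.ofReal_im] at h0
  linarith


lemma smul_one_sub_mulVec (A : Matrix (Fin 3) (Fin 3) ℂ) (μ : ℂ) (w : Fin 3 → ℂ) :
    ((μ • (1 : Matrix (Fin 3) (Fin 3) ℂ) - A) *ᵥ w) = μ • w - A *ᵥ w := by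
  rw [Matrix.sub_mulVec, Matrix.smul_mulVec, Matrix.one_mulVec]

lemma dotself_re (u : Fin 3 → ℂ) :
    (dotProduct (star u) u).re
      = Complex.normSq (u 0) + Complex.normSq (u 1) + Complex.normSq (u 2) := by
  simp [dotProduct, Fin.sum_univ_three, Complex.normSq_apply, Complex.mul_re]


end T2Aux
end

open T2Aux in
set_option maxHeartbeats 1000000 in
/-- the smallest root `t₂(z) = 2√(−p(z)/3)·cos((1/3)·arccos g(z) − 4π/3)`
is monotone decreasing on (0,1) when θ ∈ [0, π/2]. -/
theorem t2_antitone (p0 p1 p2 θ A B G D E : ℝ)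
    (h0 : 0 ≤ p0) (h1 : 0 ≤ p1) (h2 : 0 ≤ p2) (hsum : p0 + p1 + p2 = 1)
    (hθ : θ ∈ Set.Icc (0:ℝ) (Real.pi / 2))
    (hA : A = (1/6) * (1 - 3*p0^2 - 3*p1^2 - 3*p2^2))
    (hB : B = -(p0*p1 + p0*p2 + p1*p2))
    (hG : G = (1/27) * (3*p1 - 1) * (3*p2 - 1) * (3*p1 + 3*p2 - 2))
    (hD : D = (1/27) * (18*(p0*p1 + p0*p2 + p1*p2) -
        27*(p0^2*p1 + p0*p1^2 + p0^2*p2 + p1^2*p2 + p0*p2^2 + p1*p2^2)))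
    (hE : E = -2*p0*p1*p2 * Real.cos θ)
    (P Q g : ℝ → ℝ)
    (hP : P = fun z => A + B*z^2)
    (hQ : Q = fun z => G + D*z^2 + E*z^3)
    (hg : g = fun z => (3/2) * (Q z / P z) * Real.sqrt (-3 / P z))
    (hdisc : ∀ z ∈ Set.Ioo (0:ℝ) 1, 4*(P z)^3 + 27*(Q z)^2 ≤ 0)
    (t2 : ℝ → ℝ)
    (ht2 : t2 = fun z => 2 * Real.sqrt (-(P z)/3) *
        Real.cos ((1/3) * Real.arccos (g z) - 4 * Real.pi / 3)) :
    AntitoneOn t2 (Set.Ioo (0:ℝ) 1) := by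
  set ct := Real.cos θ with hct
  set st := Real.sin θ with hst
  have hpyth : ct^2 + st^2 = 1 := by rw [hct, hst]; exact Real.cos_sq_add_sin_sq θ
  -- determinant identity in terms of P and Q
  have detid : ∀ z μ : ℝ, Matrix.det ((μ:ℂ) • (1 : Matrix (Fin 3) (Fin 3) ℂ) - Hm p0 p1 p2 ct st z)
      = (((μ - 1/3)^3 + P z * (μ - 1/3) + Q z : ℝ) : ℂ) := by
    intro z μ
    rw [det_id p0 p1 p2 ct st z h0 h1 h2 hsum hpyth μ]
    congr 1
    simp only [hP, hQ, hA, hB, hG, hD, hE, hct]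
  -- main per-point structure
  have main2 : ∀ z ∈ Set.Ioo (0:ℝ) 1,
      (∀ v : Fin 3 → ℂ, (t2 z + 1/3) * (dotProduct (star v) v).re
          ≤ (dotProduct (star v) (Hm p0 p1 p2 ct st z *ᵥ v)).re)
      ∧ (∃ w : Fin 3 → ℂ, w ≠ 0 ∧ Hm p0 p1 p2 ct st z *ᵥ w = (((t2 z + 1/3 : ℝ)):ℂ) • w) := by
    intro z hz
    have hPz : P z ≤ 0 := by
      by_contra hcon
      push_neg at hcon
      have h3 : 0 < (P z)^3 := pow_pos hcon 3
      have := hdisc z hz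
      nlinarith [sq_nonneg (Q z)]
    obtain ⟨T0, T1, T2, hT2eq, h20, h21, hfact⟩ := cubic_key (P z) (Q z) hPz (hdisc z hz)
    have ht2z : t2 z = T2 := by
      rw [ht2, hT2eq, hg]
    have rootub : ∀ μ : ℝ, Matrix.det ((μ:ℂ) • (1 : Matrix (Fin 3) (Fin 3) ℂ) - Hm p0 p1 p2 ct st z) = 0
        → t2 z + 1/3 ≤ μ := by
      intro μ hdet
      rw [detid z μ, Complex.ofReal_eq_zero] at hdet
      have hfac := hfact (μ - 1/3)
      rw [hdet] at hfac
      rcases mul_eq_zero.mp hfac with hf | hf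
      · rcases mul_eq_zero.mp hf with hf' | hf'
        · have : μ - 1/3 = T0 := by linarith [sub_eq_zero.mp hf']
          rw [ht2z]; linarith
        · have : μ - 1/3 = T1 := by linarith [sub_eq_zero.mp hf']
          rw [ht2z]; linarith
      · have : μ - 1/3 = T2 := by linarith [sub_eq_zero.mp hf]
        rw [ht2z]; linarith
    constructor
    · refine rayleigh_lb (Hm_herm p0 p1 p2 ct st z) (fun μ hμ => ?_)
      obtain ⟨w, hw0, hww⟩ := hμ
      refine rootub μ (Matrix.exists_mulVec_eq_zero_iff.mp ⟨w, hw0, ?_⟩)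
      rw [smul_one_sub_mulVec, hww, sub_self]
    · have hdet0 : Matrix.det (((t2 z + 1/3 : ℝ):ℂ) • (1 : Matrix (Fin 3) (Fin 3) ℂ) - Hm p0 p1 p2 ct st z)
          = 0 := by
        rw [detid z (t2 z + 1/3), Complex.ofReal_eq_zero,
          show (t2 z + 1/3 - 1/3 : ℝ) = T2 by rw [ht2z]; ring, ← hfact T2, sub_self, mul_zero]
      obtain ⟨w, hw0, hww⟩ := Matrix.exists_mulVec_eq_zero_iff.mpr hdet0
      refine ⟨w, hw0, ?_⟩
      rw [smul_one_sub_mulVec] at hww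
      exact (sub_eq_zero.mp hww).symm
  -- the antitonicity argument
  intro x hx y hy hxy
  have hx0 : (0:ℝ) < x := hx.1
  have hy0 : (0:ℝ) < y := hy.1
  have hyne : y ≠ 0 := ne_of_gt hy0
  obtain ⟨rayx, hwx⟩ := main2 x hx
  obtain ⟨rayy, -⟩ := main2 y hy
  obtain ⟨w, hw0, hww⟩ := hwx
  have hNpos : 0 < (dotProduct (star w) w).re := by
    rcases lt_or_ge 0 ((dotProduct (star w) w).re) with h | h
    · exact h
    · exfalso
      apply hw0
      rw [dotself_re] at h
      have q0 := Complex.normSq_nonneg (w 0)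
      have q1 := Complex.normSq_nonneg (w 1)
      have q2 := Complex.normSq_nonneg (w 2)
      have e0 : Complex.normSq (w 0) = 0 := by linarith
      have e1 : Complex.normSq (w 1) = 0 := by linarith
      have e2 : Complex.normSq (w 2) = 0 := by linarith
      ext j
      fin_cases j
      · exact Complex.normSq_eq_zero.mp e0
      · exact Complex.normSq_eq_zero.mp e1
      · exact Complex.normSq_eq_zero.mp e2
  have hLHS : (dotProduct (star w) (Hm p0 p1 p2 ct st x *ᵥ w)).re
      = (t2 x + 1/3) * (dotProduct (star w) w).re := by
    rw [hww, dotProduct_smul, smul_eq_mul]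
    simp [Complex.mul_re]
  have haff : Hm p0 p1 p2 ct st x = ((1 - x/y : ℝ):ℂ) • Hm p0 p1 p2 ct st 0
      + ((x/y : ℝ):ℂ) • Hm p0 p1 p2 ct st y := by
    ext i j
    fin_cases i <;> fin_cases j <;>
      (simp [Hm, Matrix.add_apply, Matrix.smul_apply, Matrix.vecHead, Matrix.vecTail];
        push_cast; field_simp <;> ring)
  have hsplit : (dotProduct (star w) (Hm p0 p1 p2 ct st x *ᵥ w)).re
      = (1 - x/y) * (dotProduct (star w) (Hm p0 p1 p2 ct st 0 *ᵥ w)).re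
        + (x/y) * (dotProduct (star w) (Hm p0 p1 p2 ct st y *ᵥ w)).re := by
    rw [haff, Matrix.add_mulVec, Matrix.smul_mulVec, Matrix.smul_mulVec,
      dotProduct_add, dotProduct_smul, dotProduct_smul,
      smul_eq_mul, smul_eq_mul]
    simp [Complex.add_re, Complex.mul_re]
  have hdiag0 : t2 y + 1/3 ≤ p0 := by
    have hr := rayy ![1,0,0]
    simp [Hm, Matrix.mulVec, dotProduct, Fin.sum_univ_three, Matrix.vecHead,
      Matrix.vecTail] at hr
    linarith
  have hdiag1 : t2 y + 1/3 ≤ p1 := by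
    have hr := rayy ![0,1,0]
    simp [Hm, Matrix.mulVec, dotProduct, Fin.sum_univ_three, Matrix.vecHead,
      Matrix.vecTail] at hr
    linarith
  have hdiag2 : t2 y + 1/3 ≤ p2 := by
    have hr := rayy ![0,0,1]
    simp [Hm, Matrix.mulVec, dotProduct, Fin.sum_univ_three, Matrix.vecHead,
      Matrix.vecTail] at hr
    linarith
  have hdotD : (dotProduct (star w) (Hm p0 p1 p2 ct st 0 *ᵥ w)).re
      = p0 * Complex.normSq (w 0) + p1 * Complex.normSq (w 1) + p2 * Complex.normSq (w 2) := by
    simp [Hm, Matrix.mulVec, dotProduct, Fin.sum_univ_three, Matrix.vecHead,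
      Matrix.vecTail, Complex.normSq_apply, Complex.mul_re]
    ring
  have hR0 : (t2 y + 1/3) * (dotProduct (star w) w).re
      ≤ (dotProduct (star w) (Hm p0 p1 p2 ct st 0 *ᵥ w)).re := by
    rw [hdotD, dotself_re]
    nlinarith [Complex.normSq_nonneg (w 0), Complex.normSq_nonneg (w 1),
      Complex.normSq_nonneg (w 2)]
  have hRy := rayy w
  have hc1 : 0 ≤ 1 - x/y := by
    have : x/y ≤ 1 := (div_le_one hy0).mpr hxy
    linarith
  have hc2 : 0 ≤ x/y := by positivity
  have hcsum : (1 - x/y) + (x/y) = 1 := by ring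
  have hfin : (t2 y + 1/3) * (dotProduct (star w) w).re
      ≤ (t2 x + 1/3) * (dotProduct (star w) w).re := by
    rw [← hLHS, hsplit]
    nlinarith [mul_le_mul_of_nonneg_left hR0 hc1, mul_le_mul_of_nonneg_left hRy hc2]
  have := (mul_le_mul_iff_left₀ hNpos).mp hfin
  linarith
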